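/- Let F be a linearly ordered field, A a magnitude of F, and let β = b + B and γ be cosets of magnitudes of F such that B ≤ β and β ≤ γ. Then A * β ≤ A * γ, where * is the Minkowski (pointwise) product of sets (compatibility of the order on cosets with multiplication by a magnitude). -/

import Mathlib

open Pointwise

/-- A *magnitude* of a linearly ordered field `F` is an order-convex additive subgroup of `F`,
given as a set: it contains `0`, is closed under addition and negation, and is order-convex. -/
def IsMagnitude {F : Type*} [Field F] [LinearOrder F] [IsStrictOrderedRing F] (A : Set F) : Prop :=
  (0 : F) ∈ A ∧ (∀ x ∈ A, ∀ y ∈ A, x + y ∈ A) ∧ (∀ x ∈ A, -x ∈ A) ∧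
    (∀ x ∈ A, ∀ y ∈ A, ∀ z : F, x ≤ z → z ≤ y → z ∈ A)

/-- Order relation on subsets of `F`: `S ≤ T` iff every element of `S` is below some element of `T`. -/
def SetLE {F : Type*} [Field F] [LinearOrder F] [IsStrictOrderedRing F] (S T : Set F) : Prop :=
  ∀ x ∈ S, ∃ y ∈ T, x ≤ y

theorem coset_le_mul_magnitude_compat {F : Type*} [Field F] [LinearOrder F] [IsStrictOrderedRing F]
    (A B C : Set F) (hA : IsMagnitude A) (hB : IsMagnitude B) (hC : IsMagnitude C)
    (b c : F) (hBβ : SetLE B ({b} + B)) (hβγ : SetLE ({b} + B) ({c} + C)) :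
    SetLE (A * ({b} + B)) (A * ({c} + C)) := by
  have hmem : ∀ (d : F) (D : Set F) (t : F), t ∈ ({d} + D) ↔ ∃ v ∈ D, t = d + v := by
    intro d D t
    constructor
    · rintro ⟨u, rfl, v, hv, rfl⟩; exact ⟨v, hv, rfl⟩
    · rintro ⟨v, hv, rfl⟩; exact ⟨d, rfl, v, hv, rfl⟩
  rintro z ⟨a, ha, t, ht, rfl⟩
  obtain ⟨x, hx, rfl⟩ := (hmem b B t).1 ht
  rcases le_or_gt 0 a with hpos | hneg
  · obtain ⟨y, hy, hle⟩ := hβγ (b + x) ((hmem b B _).2 ⟨x, hx, rfl⟩)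
    exact ⟨a * y, ⟨a, ha, y, hy, rfl⟩, mul_le_mul_of_nonneg_left hle hpos⟩
  · obtain ⟨t1, ht1, h1⟩ := hBβ (-x) (hB.2.2.1 x hx)
    obtain ⟨x', hx', rfl⟩ := (hmem b B t1).1 ht1
    obtain ⟨t2, ht2, h2⟩ := hBβ x' hx'
    obtain ⟨x'', hx'', rfl⟩ := (hmem b B t2).1 ht2
    obtain ⟨y, hy, h3⟩ := hβγ (b + x'') ((hmem b B _).2 ⟨x'', hx'', rfl⟩)
    refine ⟨-a * y, ⟨-a, hA.2.2.1 a ha, y, hy, rfl⟩, ?_⟩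
    have hneg' : -(b + x) ≤ y := by linarith
    have h : a * (b + x) = -a * -(b + x) := by ring
    show a * (b + x) ≤ -a * y
    rw [h]
    exact mul_le_mul_of_nonneg_left hneg' (by linarith)
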